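/- Substitution of equivalents holds in AA: if ψ ↔ η is valid, then φ[p/ψ] ↔ φ[p/η] is valid, for any formula φ and atom p. -/
import Mathlib


/-- Formulas of asynchronous announcement logic over agents `A` and atoms `P`.
`⊥` is included as a primitive for convenience (it is an abbreviation in the paper). -/
inductive Form (A P : Type) : Type where
  | bot  : Form A P
  | atom : P → Form A P
  | neg  : Form A P → Form A P
  | and  : Form A P → Form A P → Form A P
  | know : A → Form A P → Form A P
  | ann  : Form A P → Form A P → Form A P
  | next : A → Form A P → Form A P

namespace Form

def size {A P : Type} : Form A P → ℕ
  | bot => 1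
  | atom _ => 1
  | neg φ => φ.size + 1
  | and φ ψ => φ.size + ψ.size + 1
  | know _ φ => φ.size + 1
  | ann φ ψ => φ.size + ψ.size + 1
  | next _ φ => φ.size + 1

theorem size_pos {A P : Type} (φ : Form A P) : 1 ≤ φ.size := by
  cases φ <;> simp [size]

end Form

/-- An epistemic frame with valuation: equivalence relations `∼ₐ` and a valuation. -/
structure Frame (A P S : Type) where
  rel : A → S → S → Prop
  equiv : ∀ a, Equivalence (rel a)
  val : P → Set S

/-- `g ≤ₐ f` between cuts. -/
def cutLE {A : Type} (a : A) (g f : A → ℕ) : Prop :=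
  g a = f a ∧ ∀ b, b ≠ a → g b ≤ f a

/-- `f⁺ᵃ`: increment the cut `f` at agent `a`. -/
def inc {A : Type} [DecidableEq A] (a : A) (f : A → ℕ) : A → ℕ :=
  fun b => if b = a then f a + 1 else f b

def histSize {A P : Type} (σ : List (Form A P)) : ℕ := (σ.map Form.size).sum

mutual
/-- Truth in an asynchronous (pre-)model.  The announcement history `σ` is stored
with the most recent announcement first; `f` is the cut, `s` the state. -/
def Sat {A P S : Type} [DecidableEq A] (F : Frame A P S) : List (Form A P) → (A → ℕ) → S → Form A P → Prop
  | _, _, _, .bot => False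
  | _, _, s, .atom p => s ∈ F.val p
  | σ, f, s, .neg φ => ¬ Sat F σ f s φ
  | σ, f, s, .and φ ψ => Sat F σ f s φ ∧ Sat F σ f s ψ
  | σ, f, s, .know a φ =>
      ∀ t g, F.rel a s t → cutLE a g f → Good F σ g t → Sat F σ g t φ
  | σ, f, s, .ann ψ χ => Sat F σ f s ψ → Sat F (ψ :: σ) f s χ
  | σ, f, s, .next a φ => f a < σ.length → Sat F σ (inc a f) s φ
termination_by σ _ _ φ => histSize σ + φ.size
decreasing_by
  all_goals simp_all [histSize, Form.size]
  all_goals first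
    | omega
    | (have := Form.size_pos φ; omega)

/-- `(S,∼,V,s,σ,f)` is an asynchronous model (the history together with the cut
can be generated by truthful announcements and receptions). -/
def Good {A P S : Type} [DecidableEq A] (F : Frame A P S) : List (Form A P) → (A → ℕ) → S → Prop
  | [], f, _ => ∀ a, f a = 0
  | ψ :: σ, f, s =>
      (∀ a, f a ≤ σ.length + 1) ∧
      ∃ f', (∀ a, f' a ≤ f a) ∧ Good F σ f' s ∧ Sat F σ f' s ψ
termination_by σ _ _ => histSize σ + 1
decreasing_by
  all_goals simp_all [histSize, Form.size]
  all_goals (have := Form.size_pos ψ; omega)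
end


/-- Uniform substitution `φ[p/ρ]` of `ρ` for the atom `p` in `φ`
(in an announcement, both the announced formula and the continuation are substituted). -/
def Form.subst {A P : Type} [DecidableEq P] (p : P) (ρ : Form A P) : Form A P → Form A P
  | .bot => .bot
  | .atom q => if q = p then ρ else .atom q
  | .neg φ => .neg (Form.subst p ρ φ)
  | .and φ ψ => .and (Form.subst p ρ φ) (Form.subst p ρ ψ)
  | .know a φ => .know a (Form.subst p ρ φ)
  | .ann φ ψ => .ann (Form.subst p ρ φ) (Form.subst p ρ ψ)
  | .next a φ => .next a (Form.subst p ρ φ)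

namespace AAProofAux

variable {A P S : Type} [DecidableEq A] [DecidableEq P]

theorem good_le (F : Frame A P S) :
    ∀ (σ : List (Form A P)) (f : A → ℕ) (s : S), Good F σ f s → ∀ a, f a ≤ σ.length := by
  intro σ f s hg a
  cases σ with
  | nil => simp [Good] at hg; simp [hg a]
  | cons χ σ => simp [Good] at hg; simpa using hg.1 a

theorem good_push (F : Frame A P S) (σ : List (Form A P)) (f : A → ℕ) (s : S)
    (χ : Form A P) (hg : Good F σ f s) (hs : Sat F σ f s χ) : Good F (χ :: σ) f s := by
  simp [Good]
  exact ⟨fun a => le_trans (good_le F σ f s hg a) (by omega),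
    f, fun a => le_refl _, hg, hs⟩

theorem good_inc (F : Frame A P S) (σ : List (Form A P)) (f : A → ℕ) (s : S)
    (a : A) (hg : Good F σ f s) (hlt : f a < σ.length) : Good F σ (inc a f) s := by
  cases σ with
  | nil => simp at hlt
  | cons χ σ =>
    simp [Good] at hg ⊢
    obtain ⟨h1, f', hf', hgood, hsat⟩ := hg
    refine ⟨fun b => ?_, f', fun b => le_trans (hf' b) ?_, hgood, hsat⟩
    · by_cases hb : b = a <;> simp [inc, hb]
      · simp at hlt; omega
      · exact h1 b
    · by_cases hb : b = a <;> simp [inc, hb]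

/-- Interpretation of a tagged history entry: `inl α` is a common formula,
`inr χ` is a template substituted by `ρ`. -/
def itp (p : P) (ρ : Form A P) : Form A P ⊕ Form A P → Form A P
  | .inl α => α
  | .inr χ => Form.subst p ρ χ

/-- Weight of a tagged entry, where templates are scaled by `C`. -/
def wt (C : ℕ) : Form A P ⊕ Form A P → ℕ
  | .inl α => α.size
  | .inr χ => χ.size * C

def W (C : ℕ) (τ : List (Form A P ⊕ Form A P)) : ℕ := (τ.map (wt C)).sum

theorem main (F : Frame A P S) (p : P) (ψ η : Form A P)
    (h : ∀ (σ : List (Form A P)) (f : A → ℕ) (s : S),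
      Good F σ f s → (Sat F σ f s ψ ↔ Sat F σ f s η)) :
    ∀ (n : ℕ) (τ : List (Form A P ⊕ Form A P)) (f : A → ℕ) (s : S),
      (W (η.size + 1) τ + 1 ≤ n →
        (Good F (τ.map (itp p ψ)) f s ↔ Good F (τ.map (itp p η)) f s)) ∧
      (∀ α : Form A P, W (η.size + 1) τ + α.size ≤ n →
        (Sat F (τ.map (itp p ψ)) f s α ↔ Sat F (τ.map (itp p η)) f s α)) ∧
      (∀ χ : Form A P, W (η.size + 1) τ + χ.size * (η.size + 1) ≤ n →
        Good F (τ.map (itp p ψ)) f s →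
        (Sat F (τ.map (itp p ψ)) f s (Form.subst p ψ χ) ↔
         Sat F (τ.map (itp p η)) f s (Form.subst p η χ))) := by
  intro n
  induction n using Nat.strong_induction_on with
  | _ n IH =>
  intro τ f s
  set C := η.size + 1 with hC
  have lenEq : (τ.map (itp p ψ)).length = (τ.map (itp p η)).length := by simp
  have wtpos : ∀ x : Form A P ⊕ Form A P, 1 ≤ wt C x := by
    rintro (α | χ) <;> simp [wt]
    · exact α.size_pos
    · exact Nat.one_le_iff_ne_zero.mpr (Nat.mul_ne_zero
        (Nat.one_le_iff_ne_zero.mp χ.size_pos) (by omega))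
  refine ⟨?_, ?_, ?_⟩
  · -- Good equivalence
    intro hn
    cases τ with
    | nil => simp
    | cons x τ =>
      have hW : W C (x :: τ) = wt C x + W C τ := by simp [W]
      simp only [List.map_cons, Good]
      have hlen : (τ.map (itp p ψ)).length = (τ.map (itp p η)).length := by simp
      rw [hlen]
      constructor
      · rintro ⟨h1, f', hf', hgood, hsat⟩
        refine ⟨h1, f', hf', ?_, ?_⟩
        · exact ((IH (W C τ + 1) (by have := wtpos x; omega) τ f' s).1 (le_refl _)).mp hgood
        · cases x with
          | inl α =>
            exact ((IH (W C τ + α.size) (by simp [hW, wt] at hn ⊢; omega) τ f' s).2.1 α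
              (le_refl _)).mp (by simpa [itp] using hsat)
          | inr χ =>
            exact ((IH (W C τ + χ.size * C) (by simp [hW, wt] at hn ⊢; omega) τ f' s).2.2 χ
              (le_refl _) hgood).mp (by simpa [itp] using hsat)
      · rintro ⟨h1, f', hf', hgood, hsat⟩
        have hgood' : Good F (τ.map (itp p ψ)) f' s :=
          ((IH (W C τ + 1) (by have := wtpos x; omega) τ f' s).1 (le_refl _)).mpr hgood
        refine ⟨h1, f', hf', hgood', ?_⟩
        cases x with
        | inl α =>
          exact ((IH (W C τ + α.size) (by simp [hW, wt] at hn ⊢; omega) τ f' s).2.1 α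
            (le_refl _)).mpr (by simpa [itp] using hsat)
        | inr χ =>
          exact ((IH (W C τ + χ.size * C) (by simp [hW, wt] at hn ⊢; omega) τ f' s).2.2 χ
            (le_refl _) hgood').mpr (by simpa [itp] using hsat)
  · -- Sat equivalence for a common formula
    intro α hn
    cases α with
    | bot => simp [Sat]
    | atom q => simp [Sat]
    | neg α =>
      simp only [Sat]
      rw [(IH (W C τ + α.size) (by first | omega | (simp [Form.size, Nat.add_mul, Nat.one_mul] at hn; omega)) τ f s).2.1 α (le_refl _)]
    | and α β =>
      simp only [Sat]
      rw [(IH (W C τ + α.size) (by first | omega | (simp [Form.size, Nat.add_mul, Nat.one_mul] at hn; omega)) τ f s).2.1 α (le_refl _),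
          (IH (W C τ + β.size) (by first | omega | (simp [Form.size, Nat.add_mul, Nat.one_mul] at hn; omega)) τ f s).2.1 β (le_refl _)]
    | know a α =>
      simp only [Sat] at *
      constructor <;> intro H t g hrel hcut hgood
      · exact ((IH (W C τ + α.size) (by first | omega | (simp [Form.size, Nat.add_mul, Nat.one_mul] at hn; omega)) τ g t).2.1 α
          (le_refl _)).mp (H t g hrel hcut
          (((IH (W C τ + 1) (by have := α.size_pos; simp [Form.size] at hn; omega) τ g t).1
            (le_refl _)).mpr hgood))
      · exact ((IH (W C τ + α.size) (by first | omega | (simp [Form.size, Nat.add_mul, Nat.one_mul] at hn; omega)) τ g t).2.1 α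
          (le_refl _)).mpr (H t g hrel hcut
          (((IH (W C τ + 1) (by have := α.size_pos; simp [Form.size] at hn; omega) τ g t).1
            (le_refl _)).mp hgood))
    | ann α β =>
      simp only [Sat] at *
      have h1 := (IH (W C τ + α.size) (by first | omega | (simp [Form.size, Nat.add_mul, Nat.one_mul] at hn; omega)) τ f s).2.1 α (le_refl _)
      have h2 := (IH (W C (.inl α :: τ) + β.size)
        (by simp [W, wt, Form.size] at hn ⊢; omega) (.inl α :: τ) f s).2.1 β (le_refl _)
      simp only [List.map_cons, itp] at h2
      rw [h1, h2]
    | next a α =>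
      simp only [Sat] at *
      rw [lenEq, (IH (W C τ + α.size) (by first | omega | (simp [Form.size, Nat.add_mul, Nat.one_mul] at hn; omega)) τ (inc a f) s).2.1 α
        (le_refl _)]
  · -- Sat equivalence for substituted templates
    intro χ hn hgood
    have hgood' : Good F (τ.map (itp p η)) f s := by
      refine ((IH (W C τ + 1) ?_ τ f s).1 (le_refl _)).mp hgood
      have h8 : C ≤ χ.size * C := Nat.le_mul_of_pos_left C χ.size_pos
      have h7 := η.size_pos
      omega
    cases χ with
    | bot => simp [Form.subst, Sat]
    | atom q =>
      by_cases hq : q = p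
      · subst hq
        have e1 : Form.subst q ψ (Form.atom q) = ψ := by simp [Form.subst]
        have e2 : Form.subst q η (Form.atom q) = η := by simp [Form.subst]
        rw [e1, e2, h _ f s hgood]
        exact (IH (W C τ + η.size) (by first | omega | (simp [Form.size, Nat.add_mul, Nat.one_mul] at hn; omega)) τ f s).2.1 η (le_refl _)
      · simp [Form.subst, hq, Sat]
    | neg χ =>
      simp only [Form.subst, Sat]
      rw [(IH (W C τ + χ.size * C) (by first | omega | (simp [Form.size, Nat.add_mul, Nat.one_mul] at hn; omega)) τ f s).2.2 χ
        (le_refl _) hgood]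
    | and χ₁ χ₂ =>
      simp only [Form.subst, Sat]
      rw [(IH (W C τ + χ₁.size * C) (by first | nlinarith | (simp [Form.size, Nat.add_mul, Nat.one_mul] at hn; first | omega | nlinarith)) τ f s).2.2 χ₁
            (le_refl _) hgood,
          (IH (W C τ + χ₂.size * C) (by first | nlinarith | (simp [Form.size, Nat.add_mul, Nat.one_mul] at hn; first | omega | nlinarith)) τ f s).2.2 χ₂
            (le_refl _) hgood]
    | know a χ =>
      simp only [Form.subst, Sat]
      constructor <;> intro H t g hrel hcut hg2
      · have hg1 : Good F (τ.map (itp p ψ)) g t :=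
          ((IH (W C τ + 1) (by
            have h9 : C ≤ (χ.size + 1) * C := Nat.le_mul_of_pos_left C (by omega)
            have h7 := η.size_pos
            simp only [Form.size] at hn ⊢ <;> omega) τ g t).1 (le_refl _)).mpr hg2
        exact ((IH (W C τ + χ.size * C) (by first | nlinarith | (simp [Form.size, Nat.add_mul, Nat.one_mul] at hn; first | omega | nlinarith)) τ g t).2.2 χ
          (le_refl _) hg1).mp (H t g hrel hcut hg1)
      · have hg1 : Good F (τ.map (itp p η)) g t :=
          ((IH (W C τ + 1) (by
            have h9 : C ≤ (χ.size + 1) * C := Nat.le_mul_of_pos_left C (by omega)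
            have h7 := η.size_pos
            simp only [Form.size] at hn ⊢ <;> omega) τ g t).1 (le_refl _)).mp hg2
        exact ((IH (W C τ + χ.size * C) (by first | nlinarith | (simp [Form.size, Nat.add_mul, Nat.one_mul] at hn; first | omega | nlinarith)) τ g t).2.2 χ
          (le_refl _) hg2).mpr (H t g hrel hcut hg1)
    | ann χ₁ χ₂ =>
      simp only [Form.subst, Sat]
      have h1 := (IH (W C τ + χ₁.size * C) (by first | nlinarith | (simp [Form.size, Nat.add_mul, Nat.one_mul] at hn; first | omega | nlinarith)) τ f s).2.2 χ₁
        (le_refl _) hgood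
      constructor <;> intro H hs1
      · have hsψ : Sat F (τ.map (itp p ψ)) f s (Form.subst p ψ χ₁) := h1.mpr hs1
        have hg1 : Good F ((Form.subst p ψ χ₁) :: τ.map (itp p ψ)) f s :=
          good_push F _ f s _ hgood hsψ
        have h2 := (IH (W C (.inr χ₁ :: τ) + χ₂.size * C)
          (by simp [W, wt, Form.size] at hn ⊢; nlinarith) (.inr χ₁ :: τ) f s).2.2 χ₂
          (le_refl _) (by simpa [itp] using hg1)
        simp only [List.map_cons, itp] at h2
        exact h2.mp (H hsψ)
      · have hsη : Sat F (τ.map (itp p η)) f s (Form.subst p η χ₁) := h1.mp hs1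
        have hg1 : Good F ((Form.subst p ψ χ₁) :: τ.map (itp p ψ)) f s :=
          good_push F _ f s _ hgood hs1
        have h2 := (IH (W C (.inr χ₁ :: τ) + χ₂.size * C)
          (by simp [W, wt, Form.size] at hn ⊢; nlinarith) (.inr χ₁ :: τ) f s).2.2 χ₂
          (le_refl _) (by simpa [itp] using hg1)
        simp only [List.map_cons, itp] at h2
        exact h2.mpr (H hsη)
    | next a χ =>
      simp only [Form.subst, Sat]
      rw [lenEq]
      constructor <;> intro H hlt
      · have hg1 : Good F (τ.map (itp p ψ)) (inc a f) s :=
          good_inc F _ f s a hgood (by rw [lenEq]; exact hlt)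
        exact ((IH (W C τ + χ.size * C) (by first | omega | (simp [Form.size, Nat.add_mul, Nat.one_mul] at hn; omega)) τ (inc a f) s).2.2 χ
          (le_refl _) hg1).mp (H hlt)
      · have hg1 : Good F (τ.map (itp p ψ)) (inc a f) s :=
          good_inc F _ f s a hgood (by rw [lenEq]; exact hlt)
        exact ((IH (W C τ + χ.size * C) (by first | omega | (simp [Form.size, Nat.add_mul, Nat.one_mul] at hn; omega)) τ (inc a f) s).2.2 χ
          (le_refl _) hg1).mpr (H hlt)

theorem map_itp_inl (p : P) (ρ : Form A P) :
    ∀ σ : List (Form A P), (σ.map Sum.inl).map (itp p ρ) = σ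
  | [] => rfl
  | a :: σ => by
    simp only [List.map_cons]
    rw [map_itp_inl p ρ σ]; rfl

end AAProofAux

/-- Substitution of equivalents holds in AA: if `ψ ↔ η` is valid (true in every
asynchronous model), then `φ[p/ψ] ↔ φ[p/η]` is valid. -/
theorem subst_equiv {A P : Type} [DecidableEq A] [DecidableEq P] [Fintype A] [Countable P]
    (p : P) (φ ψ η : Form A P)
    (h : ∀ (S : Type) (F : Frame A P S) (σ : List (Form A P)) (f : A → ℕ) (s : S),
      Good F σ f s → (Sat F σ f s ψ ↔ Sat F σ f s η)) :
    ∀ (S : Type) (F : Frame A P S) (σ : List (Form A P)) (f : A → ℕ) (s : S),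
      Good F σ f s →
      (Sat F σ f s (Form.subst p ψ φ) ↔ Sat F σ f s (Form.subst p η φ)) := by
  intro S F σ f s hgood
  have := (AAProofAux.main F p ψ η (h S F)
    (AAProofAux.W (η.size + 1) (σ.map Sum.inl) + φ.size * (η.size + 1))
    (σ.map Sum.inl) f s).2.2 φ (le_refl _)
  have hmap : ∀ ρ : Form A P, (σ.map Sum.inl).map (AAProofAux.itp p ρ) = σ :=
    fun ρ => AAProofAux.map_itp_inl p ρ σ
  rw [hmap, hmap] at this
  exact this hgood
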